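/- Assume the continuum hypothesis. Then there exists a mad family 𝒜 on ω such that the filter F(𝒜) is a strong P⁺-filter. -/

import Mathlib

open Set Filter

/-- The characteristic function of a set, viewing `𝒫(α)` inside the Cantor space `α → Bool`. -/
noncomputable def chi {α : Type*} (X : Set α) : α → Bool :=
  fun n => @decide (n ∈ X) (Classical.propDecidable _)

/-- A family of subsets of `α` viewed as a subset of the Cantor space `α → Bool`. -/
noncomputable def toCantor {α : Type*} (A : Set (Set α)) : Set (α → Bool) := chi '' A

/-- A family of subsets of `α` is meager if it is meager as a subset of the Cantor space. -/
def MeagerFamily {α : Type*} (A : Set (Set α)) : Prop := IsMeagre (toCantor A)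

/-- A family of subsets of `α` has the Baire property if, viewed in the Cantor space,
it differs from an open set by a meager set. -/
def HasBP {α : Type*} (A : Set (Set α)) : Prop :=
  ∃ U : Set (α → Bool), IsOpen U ∧ IsMeagre (symmDiff (toCantor A) U)

/-- `A` has the Baire property relative to `C ⊆ 2^α`: the trace of `A` on `C` differs from a
relatively open subset of `C` by a set meager in `C`. -/
def RelBP {α : Type*} (A : Set (Set α)) (C : Set (α → Bool)) : Prop :=
  ∃ O : Set C, IsOpen O ∧ IsMeagre (symmDiff (Subtype.val ⁻¹' (toCantor A)) O)

/-- Talagrand's strong Baire property: the filter has the Baire property relative to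
every closed subset of the Cantor space. -/
def StrongBP {α : Type*} (F : Filter α) : Prop :=
  ∀ C : Set (α → Bool), IsClosed C → RelBP F.sets C

/-- `F⁺`: the sets whose complement is not in `F`, i.e. the sets compatible with `F`. -/
def Fplus {α : Type*} (F : Filter α) : Set (Set α) := {X | Xᶜ ∉ F}

/-- `F` is completely meager if for every `X ∈ F⁺` the filter generated by `F ∪ {X}` is meager. -/
def CompletelyMeager {α : Type*} (F : Filter α) : Prop :=
  ∀ X ∈ Fplus F, MeagerFamily (F ⊓ 𝓟 X).sets

/-- `F` is weakly hereditarily meager if for every `f`, either some fiber `f⁻¹(i)` is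
compatible with `F`, or the image filter `f(F)` is meager. -/
def WeaklyHereditarilyMeager {α : Type*} (F : Filter α) : Prop :=
  ∀ f : α → ℕ, (∃ i : ℕ, f ⁻¹' {i} ∈ Fplus F) ∨ MeagerFamily (Filter.map f F).sets

/-- `F` is hereditarily meager if for every `f`, the image filter `f(F)` either contains
a finite set (is improper) or is meager. -/
def HereditarilyMeager {α : Type*} (F : Filter α) : Prop :=
  ∀ f : α → ℕ, (∃ Y ∈ Filter.map f F, Y.Finite) ∨ MeagerFamily (Filter.map f F).sets

/-- `F` is a P⁺-filter: every ⊆*-decreasing sequence from `F⁺` has a pseudo-intersection in `F⁺`. -/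
def PPlusFilter {α : Type*} (F : Filter α) : Prop :=
  ∀ X : ℕ → Set α, (∀ n, X n ∈ Fplus F) → (∀ n, (X (n + 1) \ X n).Finite) →
    ∃ Y ∈ Fplus F, ∀ n, (Y \ X n).Finite

/-- `F` is a strong P⁺-filter: for every sequence from `F⁺` there is `f : ω → ω` such that
every `Y ∈ F` meets `Xₙ ∩ [0, f(n))` for all but finitely many `n`. -/
def StrongPPlusFilter (F : Filter ℕ) : Prop :=
  ∀ X : ℕ → Set ℕ, (∀ n, X n ∈ Fplus F) →
    ∃ f : ℕ → ℕ, ∀ Y ∈ F, ∀ᶠ n in Filter.atTop, (Y ∩ X n ∩ Set.Iio (f n)).Nonempty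

/-- `F` is an Fσ filter: as a subset of Cantor space it is a countable union of closed sets. -/
def IsFsigmaFilter (F : Filter ℕ) : Prop :=
  ∃ C : ℕ → Set (ℕ → Bool), (∀ n, IsClosed (C n)) ∧ toCantor F.sets = ⋃ n, C n

/-- An almost disjoint family: an infinite family of infinite sets with pairwise finite
intersections. -/
def ADFamily (𝒜 : Set (Set ℕ)) : Prop :=
  𝒜.Infinite ∧ (∀ A ∈ 𝒜, A.Infinite) ∧
    ∀ A ∈ 𝒜, ∀ B ∈ 𝒜, A ≠ B → (A ∩ B).Finite

/-- A maximal almost disjoint family. -/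
def MadFamily (𝒜 : Set (Set ℕ)) : Prop :=
  ADFamily 𝒜 ∧ ∀ X : Set ℕ, X.Infinite → ∃ A ∈ 𝒜, (X ∩ A).Infinite

/-- `F(𝒜)`: the filter generated by the complements of members of `𝒜` and the cofinite sets. -/
def madFilter (𝒜 : Set (Set ℕ)) : Filter ℕ :=
  Filter.cofinite ⊓ ⨅ A ∈ 𝒜, 𝓟 Aᶜ

/-- `I(𝒜)`: the ideal generated by `𝒜`, i.e. sets covered by finitely many members of `𝒜`
together with a finite set. -/
def madIdeal (𝒜 : Set (Set ℕ)) : Set (Set ℕ) :=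
  {X | ∃ s : Finset (Set ℕ), ↑s ⊆ 𝒜 ∧ (X \ ⋃ A ∈ s, (A : Set ℕ)).Finite}

/-- The Fubini product `F ⊗ G` of two filters. -/
def tensor {α β : Type*} (F : Filter α) (G : Filter β) : Filter (α × β) where
  sets := {X | {n | {m | (n, m) ∈ X} ∈ G} ∈ F}
  univ_sets := by simp
  sets_of_superset := by
    intro X Y hX hXY
    simp only [Set.mem_setOf_eq] at *
    filter_upwards [hX] with n hn
    filter_upwards [hn] with m hm
    exact hXY hm
  inter_sets := by
    intro X Y hX hY
    simp only [Set.mem_setOf_eq] at *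
    filter_upwards [hX, hY] with n h1 h2
    filter_upwards [h1, h2] with m hm1 hm2
    exact ⟨hm1, hm2⟩

/-- A dominating family of functions. -/
def Dominating (D : Set (ℕ → ℕ)) : Prop :=
  ∀ g : ℕ → ℕ, ∃ f ∈ D, ∀ᶠ n in Filter.atTop, g n ≤ f n

/-- The dominating number `𝔡`. -/
noncomputable def frakD : Cardinal :=
  sInf {c : Cardinal | ∃ D : Set (ℕ → ℕ), Dominating D ∧ Cardinal.mk D = c}


namespace Stmt18Aux

noncomputable local instance : DecidableEq (Set ℕ) := Classical.decEq _

/-! ### Counting in finite sets, with classical decidability -/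

noncomputable def cfilter (B : Finset ℕ) (P : ℕ → Prop) : Finset ℕ :=
  @Finset.filter _ P (Classical.decPred P) B

lemma mem_cfilter {B : Finset ℕ} {P : ℕ → Prop} {x : ℕ} :
    x ∈ cfilter B P ↔ x ∈ B ∧ P x := @Finset.mem_filter _ P (Classical.decPred P) _ _

noncomputable def cnt (B : Finset ℕ) (P : ℕ → Prop) : ℕ := (cfilter B P).card

lemma exists_of_cnt_lt {B : Finset ℕ} {P : ℕ → Prop} {s : Finset (Set ℕ)}
    (h : ∑ A ∈ s, cnt B (· ∈ A) < cnt B P) :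
    ∃ x ∈ B, P x ∧ ∀ A ∈ s, x ∉ A := by
  by_contra hc
  push_neg at hc
  have hsub : cfilter B P ⊆ s.biUnion (fun A => cfilter B (· ∈ A)) := by
    intro x hx
    rw [mem_cfilter] at hx
    obtain ⟨A, hA, hxA⟩ := hc x hx.1 hx.2
    exact Finset.mem_biUnion.2 ⟨A, hA, mem_cfilter.2 ⟨hx.1, hxA⟩⟩
  have h2 : cnt B P ≤ ∑ A ∈ s, cnt B (· ∈ A) :=
    (Finset.card_le_card hsub).trans Finset.card_biUnion_le
  omega

lemma cnt_le_one {B : Finset ℕ} {P : ℕ → Prop}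
    (h : ∀ x ∈ B, ∀ y ∈ B, P x → P y → x = y) : cnt B P ≤ 1 := by
  apply Finset.card_le_one.2
  intro x hx y hy
  rw [mem_cfilter] at hx hy
  exact h x hx.1 y hy.1 hx.2 hy.2

/-! ### The base almost disjoint family -/

def baseSet (k : ℕ) : Set ℕ := {x : ℕ | (Nat.unpair x).1 = k}

def base : Set (Set ℕ) := Set.range baseSet

lemma baseSet_infinite (k : ℕ) : (baseSet k).Infinite := by
  apply Set.infinite_of_injective_forall_mem (f := fun m => Nat.pair k m)
  · intro a b h
    have := congrArg (fun x => (Nat.unpair x).2) h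
    simpa using this
  · intro m
    simp [baseSet]

lemma baseSet_injective : Function.Injective baseSet := by
  intro k l h
  have hk : Nat.pair k 0 ∈ baseSet k := by simp [baseSet]
  rw [h] at hk
  simpa [baseSet] using hk

lemma base_infinite : base.Infinite :=
  Set.infinite_range_of_injective baseSet_injective

lemma base_countable : base.Countable := Set.countable_range _

lemma base_nonempty : base.Nonempty := ⟨baseSet 0, ⟨0, rfl⟩⟩

lemma base_mem_infinite {A : Set ℕ} (h : A ∈ base) : A.Infinite := by
  obtain ⟨k, rfl⟩ := h; exact baseSet_infinite k

lemma base_ad {A B : Set ℕ} (hA : A ∈ base) (hB : B ∈ base) (hne : A ≠ B) :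
    (A ∩ B).Finite := by
  obtain ⟨k, rfl⟩ := hA
  obtain ⟨l, rfl⟩ := hB
  have hkl : k ≠ l := fun h => hne (by rw [h])
  have : baseSet k ∩ baseSet l = ∅ := by
    ext x; simp only [Set.mem_inter_iff, baseSet, Set.mem_setOf_eq, Set.mem_empty_iff_false,
      iff_false, not_and]
    intro h1 h2; exact hkl (h1 ▸ h2 ▸ rfl)
  rw [this]; exact Set.finite_empty

/-! ### `Fplus'` and membership in `madFilter` -/

def Fplus' (𝒜 : Set (Set ℕ)) (Z : Set ℕ) : Prop :=
  ∀ s : Finset (Set ℕ), ↑s ⊆ 𝒜 → ∀ m : ℕ, ∃ x ∈ Z, m ≤ x ∧ ∀ A ∈ s, x ∉ A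

lemma Fplus'.anti {𝒜 𝒜' : Set (Set ℕ)} (hsub : 𝒜 ⊆ 𝒜') {Z : Set ℕ}
    (h : Fplus' 𝒜' Z) : Fplus' 𝒜 Z :=
  fun s hs m => h s (hs.trans hsub) m

lemma mem_madFilter_iff {𝒜 : Set (Set ℕ)} {Y : Set ℕ} :
    Y ∈ madFilter 𝒜 ↔ ∃ s : Finset (Set ℕ), ↑s ⊆ 𝒜 ∧ ∃ m : ℕ,
      {x : ℕ | m ≤ x ∧ ∀ A ∈ s, x ∉ A} ⊆ Y := by
  constructor
  · intro hY
    rw [madFilter, Filter.mem_inf_iff] at hY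
    obtain ⟨Y₁, hY₁, Y₂, hY₂, rfl⟩ := hY
    rw [Filter.mem_cofinite] at hY₁
    obtain ⟨m, hm⟩ := hY₁.bddAbove
    have h2 : (⨅ A ∈ 𝒜, 𝓟 Aᶜ) = ⨅ A : 𝒜, 𝓟 ((A : Set ℕ))ᶜ := by
      rw [iInf_subtype]
    rw [h2, Filter.mem_iInf] at hY₂
    obtain ⟨I, Ifin, V, hV, rfl⟩ := hY₂
    refine ⟨(Ifin.image (fun i => ((i : 𝒜) : Set ℕ))).toFinset, ?_, m + 1, ?_⟩
    · intro A hA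
      simp only [Finset.mem_coe, Set.Finite.mem_toFinset, Set.mem_image] at hA
      obtain ⟨i, _, rfl⟩ := hA
      exact (i : 𝒜).2
    · intro x hx
      obtain ⟨hx1, hx2⟩ := hx
      constructor
      · by_contra hxc
        have : x ∈ Y₁ᶜ := hxc
        have := hm this
        omega
      · refine Set.mem_iInter.2 (fun i => ?_)
        have hVi : ((i : 𝒜) : Set ℕ)ᶜ ⊆ V i := Filter.mem_principal.1 (hV i)
        apply hVi
        apply hx2
        simp only [Set.Finite.mem_toFinset, Set.mem_image]
        exact ⟨i, i.2, rfl⟩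
  · rintro ⟨s, hs, m, hsub⟩
    apply Filter.mem_of_superset _ hsub
    have h1 : {x : ℕ | m ≤ x} ∈ (Filter.cofinite : Filter ℕ) := by
      rw [Filter.mem_cofinite]
      apply Set.Finite.subset (Set.finite_Iio m)
      intro x hx
      simpa using hx
    have h2 : (⋂ A ∈ s, (A : Set ℕ)ᶜ) ∈ ⨅ A ∈ 𝒜, 𝓟 (A : Set ℕ)ᶜ := by
      apply Filter.biInter_mem s.finite_toSet |>.2
      intro A hA
      have hle : (⨅ A ∈ 𝒜, 𝓟 (A : Set ℕ)ᶜ) ≤ 𝓟 Aᶜ := by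
        exact biInf_le _ (hs hA)
      exact hle (Filter.mem_principal_self _)
    have := Filter.inter_mem_inf h1 h2
    rw [madFilter]
    convert this using 1
    ext x
    simp [Set.mem_iInter]

lemma fplus'_of_not_mem {𝒜 : Set (Set ℕ)} {Z : Set ℕ}
    (h : Zᶜ ∉ madFilter 𝒜) : Fplus' 𝒜 Z := by
  intro s hs m
  by_contra hc
  push_neg at hc
  apply h
  rw [mem_madFilter_iff]
  refine ⟨s, hs, m, ?_⟩
  intro x hx
  simp only [Set.mem_setOf_eq] at hx
  intro hxZ
  obtain ⟨A, hA, hxA⟩ := hc x hxZ hx.1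
  exact hx.2 A hA hxA

lemma not_fplus'_subset {𝒜 : Set (Set ℕ)} {Z : Set ℕ}
    (h : ¬ Fplus' 𝒜 Z) : ∃ s : Finset (Set ℕ), ↑s ⊆ 𝒜 ∧ ∃ m : ℕ,
      ∀ x ∈ Z, m ≤ x → ∃ A ∈ s, x ∈ A := by
  rw [Fplus'] at h
  push_neg at h
  obtain ⟨s, hs, m, hm⟩ := h
  exact ⟨s, hs, m, fun x hx hmx => (hm x hx hmx).imp (fun A hA => ⟨hA.1, hA.2⟩)⟩


/-! ### States of the construction -/

/-- Commitment data: the sequence `X`, the blocks `B`, and the family `G` present at creation. -/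
abbrev ComData := (ℕ → Set ℕ) × (ℕ → Finset ℕ) × Set (Set ℕ)

abbrev St := Set (Set ℕ) × Set ComData

def stLE (S S' : St) : Prop := S.1 ⊆ S'.1 ∧ S.2 ⊆ S'.2

lemma stLE_refl (S : St) : stLE S S := ⟨subset_rfl, subset_rfl⟩

/-- The commitment `D` is in good position relative to the family `fam`. -/
def GoodCom (fam : Set (Set ℕ)) (D : ComData) : Prop :=
  (∀ n, (D.2.1 n).Nonempty) ∧
  (∀ n, ∀ x ∈ D.2.1 n, n ≤ x ∧ x ∈ D.1 n) ∧
  D.2.2 ⊆ fam ∧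
  (∀ s : Finset (Set ℕ), ↑s ⊆ D.2.2 → ∀ m j : ℕ, ∃ N, ∀ n, N ≤ n →
      j ≤ cnt (D.2.1 n) (fun x => m ≤ x ∧ ∀ A ∈ s, x ∉ A)) ∧
  (∀ A ∈ fam, A ∉ D.2.2 → ∃ C N, ∀ n, N ≤ n → cnt (D.2.1 n) (· ∈ A) ≤ C)

def OkState (fam : Set (Set ℕ)) (com : Set ComData) : Prop :=
  base ⊆ fam ∧ (∀ A ∈ fam, A.Infinite) ∧
  (∀ A ∈ fam, ∀ B ∈ fam, A ≠ B → (A ∩ B).Finite) ∧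
  (∀ D ∈ com, GoodCom fam D)

def GoodState (fam : Set (Set ℕ)) (com : Set ComData) : Prop :=
  OkState fam com ∧ fam.Countable ∧ com.Countable

lemma ok_union {ι : Type} (Sf : ι → St)
    (hdir : ∀ i j, ∃ k, stLE (Sf i) (Sf k) ∧ stLE (Sf j) (Sf k))
    (hok : ∀ i, OkState (Sf i).1 (Sf i).2) :
    OkState (base ∪ ⋃ i, (Sf i).1) (⋃ i, (Sf i).2) := by
  have hmem : ∀ A ∈ base ∪ ⋃ i, (Sf i).1, A ∈ base ∨ ∃ i, A ∈ (Sf i).1 := by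
    intro A hA
    rcases hA with hA | hA
    · exact Or.inl hA
    · exact Or.inr (Set.mem_iUnion.1 hA)
  refine ⟨Set.subset_union_left, ?_, ?_, ?_⟩
  · intro A hA
    rcases hmem A hA with h | ⟨i, h⟩
    · exact base_mem_infinite h
    · exact (hok i).2.1 A h
  · intro A hA B hB hne
    rcases hmem A hA with h1 | ⟨i, h1⟩ <;> rcases hmem B hB with h2 | ⟨j, h2⟩
    · exact base_ad h1 h2 hne
    · exact (hok j).2.2.1 A ((hok j).1 h1) B h2 hne
    · exact (hok i).2.2.1 A h1 B ((hok i).1 h2) hne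
    · obtain ⟨k, hik, hjk⟩ := hdir i j
      exact (hok k).2.2.1 A (hik.1 h1) B (hjk.1 h2) hne
  · intro D hD
    obtain ⟨i, hDi⟩ := Set.mem_iUnion.1 hD
    obtain ⟨g1, g2, g3, g4, g5⟩ := (hok i).2.2.2 D hDi
    refine ⟨g1, g2, g3.trans (Set.subset_union_of_subset_right (Set.subset_iUnion (fun i => (Sf i).1) i) base), g4, ?_⟩
    intro A hA hAG
    rcases hmem A hA with h | ⟨j, h⟩
    · exact g5 A ((hok i).1 h) hAG
    · obtain ⟨k, hik, hjk⟩ := hdir i j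
      exact ((hok k).2.2.2 D (hik.2 hDi)).2.2.2.2 A (hjk.1 h) hAG


/-! ### The two extension lemmas -/

lemma finset_bound {α : Type*} (f : ℕ → α) (s : Finset α) (h : ∀ A ∈ s, ∃ k, f k = A) :
    ∃ K, ∀ A ∈ s, ∃ k, k ≤ K ∧ f k = A := by
  classical
  induction s using Finset.induction with
  | empty => exact ⟨0, by simp⟩
  | @insert a s ha ih =>
    obtain ⟨K, hK⟩ := ih (fun A hA => h A (Finset.mem_insert_of_mem hA))
    obtain ⟨k0, hk0⟩ := h a (Finset.mem_insert_self a s)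
    refine ⟨max K k0, fun A hA => ?_⟩
    rcases Finset.mem_insert.1 hA with rfl | hA
    · exact ⟨k0, le_max_right _ _, hk0⟩
    · obtain ⟨k, hk, he⟩ := hK A hA
      exact ⟨k, hk.trans (le_max_left _ _), he⟩

lemma addA {fam : Set (Set ℕ)} {com : Set ComData} (h : GoodState fam com)
    {Z : Set ℕ} (hZ : Fplus' fam Z) :
    ∃ A : Set ℕ, A ⊆ Z ∧ A.Infinite ∧ A ∉ fam ∧ (∀ F ∈ fam, (A ∩ F).Finite) ∧
      (∀ D ∈ com, ∃ C N, ∀ n, N ≤ n → cnt (D.2.1 n) (· ∈ A) ≤ C) := by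
  obtain ⟨⟨hbase, hinf, had, hcom⟩, hcf, hcc⟩ := h
  have hfamne : fam.Nonempty := base_nonempty.mono hbase
  obtain ⟨eA, heA⟩ := hcf.exists_eq_range hfamne
  set Bl : Set (ℕ → Finset ℕ) := insert (fun _ => (∅ : Finset ℕ)) ((fun D : ComData => D.2.1) '' com) with hBl
  have hBlc : Bl.Countable := (hcc.image _).insert _
  obtain ⟨eB, heB⟩ := hBlc.exists_eq_range ⟨_, Set.mem_insert _ _⟩
  set V : ℕ → ℕ → Finset ℕ := fun t prev =>
    (Finset.range (t+1)).biUnion (fun β => (Finset.range (prev+1)).biUnion (fun n => eB β n)) with hV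
  have hsA : ∀ t : ℕ, ↑((Finset.range (t+1)).image eA) ⊆ fam := by
    intro t A hA
    simp only [Finset.coe_image, Set.mem_image] at hA
    obtain ⟨k, _, rfl⟩ := hA
    rw [heA]; exact Set.mem_range_self k
  set pick : ℕ → ℕ → ℕ := fun t prev =>
    (hZ ((Finset.range (t+1)).image eA) (hsA t) (max (prev+1) ((V t prev).sup id + 1))).choose
    with hpickdef
  have hpick : ∀ t prev : ℕ, pick t prev ∈ Z ∧ prev < pick t prev ∧
      (∀ β ≤ t, ∀ n ≤ prev, pick t prev ∉ eB β n) ∧ (∀ k ≤ t, pick t prev ∉ eA k) := by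
    intro t prev
    obtain ⟨hx1, hx2, hx3⟩ :=
      (hZ ((Finset.range (t+1)).image eA) (hsA t) (max (prev+1) ((V t prev).sup id + 1))).choose_spec
    have hx2' : max (prev+1) ((V t prev).sup id + 1) ≤ pick t prev := hx2
    have hx1' : pick t prev ∈ Z := hx1
    have hx3' : ∀ A ∈ (Finset.range (t+1)).image eA, pick t prev ∉ A := hx3
    clear hx1 hx2 hx3
    refine ⟨hx1', ?_, ?_, ?_⟩
    · have := (le_max_left (prev+1) _).trans hx2'; omega
    · intro β hβ n hn hmem
      have hxV : pick t prev ∈ V t prev := by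
        rw [hV]
        refine Finset.mem_biUnion.2 ⟨β, Finset.mem_range.2 (by omega), ?_⟩
        exact Finset.mem_biUnion.2 ⟨n, Finset.mem_range.2 (by omega), hmem⟩
      have h1 : id (pick t prev) ≤ (V t prev).sup id := Finset.le_sup hxV
      have h2 := (le_max_right (prev+1) ((V t prev).sup id + 1)).trans hx2'
      simp only [id] at h1
      omega
    · intro k hk
      exact hx3' _ (Finset.mem_image.2 ⟨k, Finset.mem_range.2 (by omega), rfl⟩)
  set a : ℕ → ℕ := fun t => Nat.rec (pick 0 0) (fun t ih => pick (t+1) ih) t with ha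
  have haS : ∀ t, a (t+1) = pick (t+1) (a t) := fun t => rfl
  have haZ : ∀ t, a t ∈ Z := by
    intro t; cases t with
    | zero => exact (hpick 0 0).1
    | succ u => rw [haS]; exact (hpick _ _).1
  have hamono : StrictMono a := by
    apply strictMono_nat_of_lt_succ
    intro t; rw [haS]; exact (hpick (t+1) (a t)).2.1
  have haA : ∀ t k, k ≤ t → a t ∉ eA k := by
    intro t k hk
    cases t with
    | zero => exact (hpick 0 0).2.2.2 k hk
    | succ u => rw [haS]; exact (hpick (u+1) (a u)).2.2.2 k hk
  have haB : ∀ t β n, β ≤ t + 1 → n ≤ a t → a (t+1) ∉ eB β n := by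
    intro t β n hβ hn
    rw [haS]; exact (hpick (t+1) (a t)).2.2.1 β hβ n hn
  refine ⟨Set.range a, ?_, Set.infinite_range_of_injective hamono.injective, ?_, ?_, ?_⟩
  · rintro x ⟨t, rfl⟩; exact haZ t
  all_goals
    have hADf : ∀ F ∈ fam, (Set.range a ∩ F).Finite := by
      intro F hF
      rw [heA] at hF
      obtain ⟨k, rfl⟩ := hF
      apply Set.Finite.subset ((Set.finite_Iio k).image a)
      rintro x ⟨⟨t, rfl⟩, hxF⟩
      refine Set.mem_image_of_mem a ?_
      simp only [Set.mem_Iio]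
      by_contra hc
      exact haA t k (by omega) hxF
  · intro hAf
    have := hADf _ hAf
    rw [Set.inter_self] at this
    exact Set.infinite_range_of_injective hamono.injective this
  · exact hADf
  · intro D hD
    have hDBl : D.2.1 ∈ Bl := Set.mem_insert_of_mem _ ⟨D, hD, rfl⟩
    rw [heB] at hDBl
    obtain ⟨β, hβ⟩ := hDBl
    refine ⟨1, a β + 1, fun n hn => ?_⟩
    apply cnt_le_one
    have hlow := (hcom D hD).2.1
    have key : ∀ t t', t < t' → a t ∈ D.2.1 n → a t' ∈ D.2.1 n → False := by
      intro t t' htt hx hy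
      have hnat : n ≤ a t := (hlow n _ hx).1
      have hβt : β < t := by
        have h1 : a β < a t := by omega
        exact hamono.lt_iff_lt.1 h1
      obtain ⟨u, rfl⟩ : ∃ u, t' = u + 1 := ⟨t' - 1, by omega⟩
      refine haB u β n (by omega) (hnat.trans (hamono.monotone (by omega : t ≤ u))) ?_
      rw [hβ]; exact hy
    intro x hx y hy hxA hyA
    obtain ⟨t, rfl⟩ := hxA
    obtain ⟨t', rfl⟩ := hyA
    rcases lt_trichotomy t t' with hlt | heq | hgt
    · exact absurd (key t t' hlt hx hy) (fun h => h)
    · rw [heq]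
    · exact absurd (key t' t hgt hy hx) (fun h => h)

lemma addB {fam : Set (Set ℕ)} (hc : fam.Countable) (hne : fam.Nonempty)
    {X : ℕ → Set ℕ} (hX : ∀ n, Fplus' fam (X n)) :
    ∃ B : ℕ → Finset ℕ, GoodCom fam (X, B, fam) := by
  obtain ⟨eA, heA⟩ := hc.exists_eq_range hne
  have hsub : ∀ n : ℕ, ↑((Finset.range (n+1)).image eA) ⊆ fam := by
    intro n A hA
    simp only [Finset.coe_image, Set.mem_image] at hA
    obtain ⟨k, _, rfl⟩ := hA
    rw [heA]; exact Set.mem_range_self k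
  set pick : ℕ → ℕ → ℕ := fun n m =>
    (hX n ((Finset.range (n+1)).image eA) (hsub n) m).choose with hpickdef
  have hpick : ∀ n m : ℕ, pick n m ∈ X n ∧ m ≤ pick n m ∧ ∀ k ≤ n, pick n m ∉ eA k := by
    intro n m
    obtain ⟨hx1, hx2, hx3⟩ := (hX n ((Finset.range (n+1)).image eA) (hsub n) m).choose_spec
    refine ⟨hx1, hx2, fun k hk => ?_⟩
    exact hx3 _ (Finset.mem_image.2 ⟨k, Finset.mem_range.2 (by omega), rfl⟩)
  set q : ℕ → ℕ → ℕ := fun n i => Nat.rec (pick n n) (fun _ ih => pick n (ih+1)) i with hq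
  have hqS : ∀ n i, q n (i+1) = pick n (q n i + 1) := fun n i => rfl
  have hqmono : ∀ n, StrictMono (q n) := by
    intro n
    apply strictMono_nat_of_lt_succ
    intro i; rw [hqS]
    have := (hpick n (q n i + 1)).2.1; omega
  have hqX : ∀ n i, q n i ∈ X n := by
    intro n i; cases i with
    | zero => exact (hpick n n).1
    | succ u => rw [hqS]; exact (hpick n _).1
  have hqge : ∀ n i, n ≤ q n i := by
    intro n i
    induction i with
    | zero => exact (hpick n n).2.1
    | succ u ih =>
      rw [hqS]
      have := (hpick n (q n u + 1)).2.1; omega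
  have hqA : ∀ n i k, k ≤ n → q n i ∉ eA k := by
    intro n i k hk; cases i with
    | zero => exact (hpick n n).2.2 k hk
    | succ u => rw [hqS]; exact (hpick n _).2.2 k hk
  refine ⟨fun n => (Finset.range (n+1)).image (q n), ?_, ?_, subset_rfl, ?_, ?_⟩
  · intro n
    exact ⟨q n 0, Finset.mem_image.2 ⟨0, Finset.mem_range.2 (by omega), rfl⟩⟩
  · intro n x hx
    obtain ⟨i, _, rfl⟩ := Finset.mem_image.1 hx
    exact ⟨hqge n i, hqX n i⟩
  · intro s hs m j
    have hK := finset_bound eA s (fun A hA => by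
      have : A ∈ fam := hs hA
      rw [heA] at this; exact this)
    obtain ⟨K, hK⟩ := hK
    refine ⟨max K (max m j), fun n hn => ?_⟩
    have hfull : cfilter ((Finset.range (n+1)).image (q n))
        (fun x => m ≤ x ∧ ∀ A ∈ s, x ∉ A) = (Finset.range (n+1)).image (q n) := by
      apply Finset.Subset.antisymm
      · intro x hx; exact (mem_cfilter.1 hx).1
      · intro x hx
        obtain ⟨i, _, rfl⟩ := Finset.mem_image.1 hx
        refine mem_cfilter.2 ⟨hx, ?_, ?_⟩
        · have := hqge n i; omega
        · intro A hA
          obtain ⟨k, hk, rfl⟩ := hK A hA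
          exact hqA n i k (by omega)
    rw [cnt, hfull, Finset.card_image_of_injective _ (hqmono n).injective, Finset.card_range]
    omega
  · intro A hA hA2
    exact absurd hA hA2

/-! ### The combined extension step -/

lemma step_exists {fam : Set (Set ℕ)} {com : Set ComData} (h : GoodState fam com)
    (Z : Set ℕ) (X : ℕ → Set ℕ) :
    ∃ S : St, fam ⊆ S.1 ∧ com ⊆ S.2 ∧ GoodState S.1 S.2 ∧
      (Z.Infinite → ∃ A ∈ S.1, (Z ∩ A).Infinite) ∧
      ((∀ n, Fplus' S.1 (X n)) → ∃ B G, (X, B, G) ∈ S.2) := by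
  have hstepA : ∃ famA : Set (Set ℕ), fam ⊆ famA ∧ GoodState famA com ∧
      (Z.Infinite → ∃ A ∈ famA, (Z ∩ A).Infinite) := by
    by_cases hZ : Fplus' fam Z
    · obtain ⟨A, hAZ, hAinf, hAnotin, hADf, hAtr⟩ := addA h hZ
      obtain ⟨⟨hbase, hinf, had, hcom⟩, hcf, hcc⟩ := h
      refine ⟨insert A fam, Set.subset_insert _ _, ⟨⟨?_, ?_, ?_, ?_⟩, hcf.insert _, hcc⟩, ?_⟩
      · exact hbase.trans (Set.subset_insert _ _)
      · intro A1 h1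
        rcases Set.mem_insert_iff.1 h1 with rfl | h1
        · exact hAinf
        · exact hinf A1 h1
      · intro A1 h1 B1 h2 hne
        rcases Set.mem_insert_iff.1 h1 with he1 | h1 <;>
          rcases Set.mem_insert_iff.1 h2 with he2 | h2
        · exact absurd (he1.trans he2.symm) hne
        · rw [he1]; exact hADf B1 h2
        · rw [he2, Set.inter_comm]; exact hADf A1 h1
        · exact had A1 h1 B1 h2 hne
      · intro D hD
        obtain ⟨g1, g2, g3, g4, g5⟩ := hcom D hD
        refine ⟨g1, g2, g3.trans (Set.subset_insert _ _), g4, ?_⟩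
        intro A1 hA1 hA1G
        rcases Set.mem_insert_iff.1 hA1 with rfl | hA1
        · exact hAtr D hD
        · exact g5 A1 hA1 hA1G
      · intro _
        exact ⟨A, Set.mem_insert _ _, by
          rw [Set.inter_eq_self_of_subset_right hAZ]; exact hAinf⟩
    · refine ⟨fam, subset_rfl, h, ?_⟩
      intro hZinf
      obtain ⟨s, hs, m, hcov⟩ := not_fplus'_subset hZ
      by_contra hcon
      push_neg at hcon
      have hsubZ : Z ⊆ (Z ∩ Set.Iio m) ∪ ⋃ A ∈ (s : Set (Set ℕ)), Z ∩ A := by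
        intro x hx
        by_cases hxm : x < m
        · exact Or.inl ⟨hx, hxm⟩
        · obtain ⟨A, hA, hxA⟩ := hcov x hx (by omega)
          exact Or.inr (Set.mem_biUnion hA ⟨hx, hxA⟩)
      have hfin : ((Z ∩ Set.Iio m) ∪ ⋃ A ∈ (s : Set (Set ℕ)), Z ∩ A).Finite := by
        apply Set.Finite.union
        · exact (Set.finite_Iio m).subset Set.inter_subset_right
        · exact Set.Finite.biUnion s.finite_toSet (fun A hA => hcon A (hs hA))
      exact hZinf (hfin.subset hsubZ)
  obtain ⟨famA, hfamA1, hfamA2, hfamA3⟩ := hstepA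
  by_cases hX : ∀ n, Fplus' famA (X n)
  · obtain ⟨B, hB⟩ := addB hfamA2.2.1 (base_nonempty.mono hfamA2.1.1) hX
    refine ⟨(famA, insert (X, B, famA) com), hfamA1, Set.subset_insert _ _,
      ⟨⟨hfamA2.1.1, hfamA2.1.2.1, hfamA2.1.2.2.1, ?_⟩, hfamA2.2.1, hfamA2.2.2.insert _⟩,
      hfamA3, fun _ => ⟨B, famA, Set.mem_insert _ _⟩⟩
    intro D hD
    rcases Set.mem_insert_iff.1 hD with rfl | hD
    · exact hB
    · exact hfamA2.1.2.2.2 D hD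
  · exact ⟨(famA, com), hfamA1, subset_rfl, hfamA2, hfamA3, fun hX' => absurd hX' hX⟩


/-! ### From CH, a well-order of the tasks with countable initial segments -/

universe u

lemma ch_zero (hCH : Cardinal.continuum.{u} = Cardinal.aleph.{u} 1) :
    Cardinal.continuum.{0} = Cardinal.aleph.{0} 1 := by
  apply Cardinal.lift_injective.{u, 0}
  rw [Cardinal.lift_continuum, Cardinal.lift_aleph]
  simpa using hCH

abbrev Task := Set ℕ × (ℕ → Set ℕ)

lemma exists_wo (hCH : Cardinal.continuum.{0} = Cardinal.aleph.{0} 1) :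
    ∃ r : Task → Task → Prop,
      WellFounded r ∧ (∀ a b, r a b ∨ a = b ∨ r b a) ∧
      ∀ t, {s | r s t}.Countable := by
  have h1 : Cardinal.mk (Set ℕ) = Cardinal.continuum := by
    rw [Cardinal.mk_set, Cardinal.mk_nat, Cardinal.two_power_aleph0]
  have h2 : Cardinal.mk (ℕ → Set ℕ) = Cardinal.continuum := by
    rw [← Cardinal.power_def, h1, Cardinal.mk_nat, Cardinal.continuum_power_aleph0]
  have hT : Cardinal.mk Task = Cardinal.aleph 1 := by
    rw [Cardinal.mk_prod, Cardinal.lift_id, Cardinal.lift_id, h1, h2,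
      Cardinal.continuum_mul_self]
    exact hCH
  have hmk : Cardinal.mk (Cardinal.aleph 1).ord.ToType = Cardinal.aleph 1 := by
    rw [Cardinal.mk_toType, Cardinal.card_ord]
  obtain ⟨e⟩ := Cardinal.eq.1 (hT.trans hmk.symm)
  refine ⟨fun a b => e a < e b, InvImage.wf e wellFounded_lt, ?_, ?_⟩
  · intro a b
    rcases lt_trichotomy (e a) (e b) with h | h | h
    · exact Or.inl h
    · exact Or.inr (Or.inl (e.injective h))
    · exact Or.inr (Or.inr h)
  · intro t
    have hle : Cardinal.mk {s : Task | e s < e t} ≤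
        Cardinal.mk {y : (Cardinal.aleph 1).ord.ToType // y < e t} := by
      apply Cardinal.mk_le_of_injective (f := fun s => ⟨e s.1, s.2⟩)
      intro a b hab
      exact Subtype.ext (e.injective (congrArg Subtype.val hab))
    have heq : Cardinal.mk {y : (Cardinal.aleph 1).ord.ToType // y < e t} <
        Cardinal.aleph 1 := by
      haveI hwo : IsWellOrder (Cardinal.aleph 1).ord.ToType
          ((· < ·) : (Cardinal.aleph 1).ord.ToType → _ → Prop) := isWellOrder_lt
      rw [← Ordinal.card_typein (r := ((· < ·) : (Cardinal.aleph 1).ord.ToType → _ → Prop)) (e t), ← Cardinal.lt_ord]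
      have := Ordinal.typein_lt_type ((· < ·) : (Cardinal.aleph 1).ord.ToType → _ → Prop) (e t)
      rwa [Ordinal.type_toType] at this
    rw [Cardinal.countable_iff_lt_aleph_one]
    exact hle.trans_lt heq

/-! ### The transfinite recursion -/

section Rec

variable (r : Task → Task → Prop) (hwf : WellFounded r)

noncomputable def stepF (t : Task) (S : St) : St :=
  @dite _ (GoodState S.1 S.2) (Classical.dec _)
    (fun h => (step_exists h t.1 t.2).choose) (fun _ => S)

lemma stepF_le (t : Task) (S : St) : stLE S (stepF t S) := by
  unfold stepF
  by_cases h : GoodState S.1 S.2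
  · rw [dif_pos h]
    obtain ⟨h1, h2, _⟩ := (step_exists h t.1 t.2).choose_spec
    exact ⟨h1, h2⟩
  · rw [dif_neg h]
    exact stLE_refl S

lemma stepF_spec (t : Task) (S : St) (h : GoodState S.1 S.2) :
    GoodState (stepF t S).1 (stepF t S).2 ∧
    (t.1.Infinite → ∃ A ∈ (stepF t S).1, (t.1 ∩ A).Infinite) ∧
    ((∀ n, Fplus' (stepF t S).1 (t.2 n)) → ∃ B G, (t.2, B, G) ∈ (stepF t S).2) := by
  unfold stepF
  rw [dif_pos h]
  obtain ⟨_, _, h3, h4, h5⟩ := (step_exists h t.1 t.2).choose_spec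
  exact ⟨h3, h4, h5⟩

noncomputable def gRec : Task → St :=
  hwf.fix (fun t ih =>
    stepF t (base ∪ ⋃ s : {s // r s t}, (ih s.1 s.2).1, ⋃ s : {s // r s t}, (ih s.1 s.2).2))

noncomputable def prevSt (t : Task) : St :=
  (base ∪ ⋃ s : {s // r s t}, (gRec r hwf s.1).1, ⋃ s : {s // r s t}, (gRec r hwf s.1).2)

lemma gRec_eq (t : Task) : gRec r hwf t = stepF t (prevSt r hwf t) := by
  unfold gRec prevSt
  exact hwf.fix_eq _ t

lemma gRec_mono {s t : Task} (hst : r s t) : stLE (gRec r hwf s) (gRec r hwf t) := by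
  have h1 : stLE (gRec r hwf s) (prevSt r hwf t) := by
    constructor
    · exact (Set.subset_iUnion (fun s : {s // r s t} => (gRec r hwf s.1).1) ⟨s, hst⟩).trans
        Set.subset_union_right
    · exact Set.subset_iUnion (fun s : {s // r s t} => (gRec r hwf s.1).2) ⟨s, hst⟩
  have h2 : stLE (prevSt r hwf t) (gRec r hwf t) := by
    rw [gRec_eq]
    exact stepF_le t _
  exact ⟨h1.1.trans h2.1, h1.2.trans h2.2⟩

variable (htot : ∀ a b, r a b ∨ a = b ∨ r b a) (hcnt : ∀ t, {s | r s t}.Countable)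

lemma good_prev (htot : ∀ a b, r a b ∨ a = b ∨ r b a) (hcnt : ∀ t, {s | r s t}.Countable)
    (t : Task) : GoodState (prevSt r hwf t).1 (prevSt r hwf t).2 := by
  induction t using hwf.induction with
  | _ t IH =>
    have hgood : ∀ s, r s t → GoodState (gRec r hwf s).1 (gRec r hwf s).2 := by
      intro s hs
      rw [gRec_eq]
      exact (stepF_spec s _ (IH s hs)).1
    have hok : OkState (prevSt r hwf t).1 (prevSt r hwf t).2 := by
      apply ok_union (Sf := fun s : {s // r s t} => gRec r hwf s.1)
      · intro i j
        rcases htot i.1 j.1 with h | h | h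
        · exact ⟨j, gRec_mono r hwf h, stLE_refl _⟩
        · refine ⟨j, ?_, stLE_refl _⟩
          rw [h]
          exact stLE_refl _
        · exact ⟨i, stLE_refl _, gRec_mono r hwf h⟩
      · intro i
        exact (hgood i.1 i.2).1
    haveI : Countable {s // r s t} := (hcnt t).to_subtype
    refine ⟨hok, ?_, ?_⟩
    · exact (base_countable.union (Set.countable_iUnion (fun s => (hgood s.1 s.2).2.1)))
    · exact Set.countable_iUnion (fun s => (hgood s.1 s.2).2.2)

lemma g_madness (htot : ∀ a b, r a b ∨ a = b ∨ r b a) (hcnt : ∀ t, {s | r s t}.Countable)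
    (t : Task) :
    t.1.Infinite → ∃ A ∈ (gRec r hwf t).1, (t.1 ∩ A).Infinite := by
  rw [gRec_eq]
  exact (stepF_spec t _ (good_prev r hwf htot hcnt t)).2.1

lemma g_com (htot : ∀ a b, r a b ∨ a = b ∨ r b a) (hcnt : ∀ t, {s | r s t}.Countable)
    (t : Task) :
    (∀ n, Fplus' (gRec r hwf t).1 (t.2 n)) → ∃ B G, (t.2, B, G) ∈ (gRec r hwf t).2 := by
  rw [gRec_eq]
  exact (stepF_spec t _ (good_prev r hwf htot hcnt t)).2.2

lemma okF (htot : ∀ a b, r a b ∨ a = b ∨ r b a) (hcnt : ∀ t, {s | r s t}.Countable) : OkState (base ∪ ⋃ t : Task, (gRec r hwf t).1) (⋃ t : Task, (gRec r hwf t).2) := by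
  apply ok_union (Sf := fun t : Task => gRec r hwf t)
  · intro i j
    rcases htot i j with h | h | h
    · exact ⟨j, gRec_mono r hwf h, stLE_refl _⟩
    · rw [h]; exact ⟨j, stLE_refl _, stLE_refl _⟩
    · exact ⟨i, stLE_refl _, gRec_mono r hwf h⟩
  · intro t
    rw [gRec_eq]
    exact (stepF_spec t _ (good_prev r hwf htot hcnt t)).1.1

end Rec

end Stmt18Aux
/-- (CH) There is a mad family `𝒜` on `ω` such that `F(𝒜)` is a strong P⁺-filter. -/
theorem stmt18 (hCH : Cardinal.continuum = Cardinal.aleph 1) :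
    ∃ 𝒜 : Set (Set ℕ), MadFamily 𝒜 ∧ StrongPPlusFilter (madFilter 𝒜) := by
  classical
  open Stmt18Aux in
  obtain ⟨r, hwf, htot, hcnt⟩ := Stmt18Aux.exists_wo (Stmt18Aux.ch_zero hCH)
  set 𝒜 : Set (Set ℕ) := Stmt18Aux.base ∪ ⋃ t : Stmt18Aux.Task, (Stmt18Aux.gRec r hwf t).1
    with h𝒜
  set comF : Set Stmt18Aux.ComData := ⋃ t : Stmt18Aux.Task, (Stmt18Aux.gRec r hwf t).2
    with hcomF
  have hok : Stmt18Aux.OkState 𝒜 comF := Stmt18Aux.okF r hwf htot hcnt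
  have hsub𝒜 : ∀ t : Stmt18Aux.Task, (Stmt18Aux.gRec r hwf t).1 ⊆ 𝒜 := fun t =>
    (Set.subset_iUnion (fun t : Stmt18Aux.Task => (Stmt18Aux.gRec r hwf t).1) t).trans
      Set.subset_union_right
  refine ⟨𝒜, ⟨⟨?_, hok.2.1, hok.2.2.1⟩, ?_⟩, ?_⟩
  · exact Stmt18Aux.base_infinite.mono Set.subset_union_left
  · -- maximality
    intro Z hZ
    obtain ⟨A, hA, hinter⟩ :=
      Stmt18Aux.g_madness r hwf htot hcnt (Z, fun _ => (∅ : Set ℕ)) hZ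
    exact ⟨A, hsub𝒜 _ hA, hinter⟩
  · -- strong P⁺
    intro X hX
    have hXp : ∀ n, Stmt18Aux.Fplus' 𝒜 (X n) := fun n =>
      Stmt18Aux.fplus'_of_not_mem (hX n)
    set t : Stmt18Aux.Task := ((∅ : Set ℕ), X) with ht
    obtain ⟨B, G, hBG⟩ := Stmt18Aux.g_com r hwf htot hcnt t
      (fun n => (hXp n).anti (hsub𝒜 t))
    have hGC : Stmt18Aux.GoodCom 𝒜 (X, B, G) :=
      hok.2.2.2 _ (Set.mem_iUnion.2 ⟨t, hBG⟩)
    obtain ⟨hne, hlowmem, hGsub, hclause, htrace⟩ := hGC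
    refine ⟨fun n => (B n).max' (hne n) + 1, ?_⟩
    intro Y hY
    rw [Stmt18Aux.mem_madFilter_iff] at hY
    obtain ⟨s, hs, m, hsubY⟩ := hY
    set s₀ := s.filter (· ∈ G) with hs₀
    set s₁ := s.filter (· ∉ G) with hs₁
    have hchoice : ∀ A : Set ℕ, ∃ C N : ℕ, A ∈ s₁ →
        ∀ n, N ≤ n → Stmt18Aux.cnt (B n) (· ∈ A) ≤ C := by
      intro A
      by_cases hA : A ∈ s₁
      · have hAf : A ∈ 𝒜 := hs (Finset.filter_subset _ _ hA)
        have hAG : A ∉ G := (Finset.mem_filter.1 hA).2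
        obtain ⟨C, N, hCN⟩ := htrace A hAf hAG
        exact ⟨C, N, fun _ => hCN⟩
      · exact ⟨0, 0, fun h => absurd h hA⟩
    choose Cf Nf hCf using hchoice
    obtain ⟨N₀, hN₀⟩ := hclause s₀ (fun A hA => (Finset.mem_filter.1 hA).2) m
      (1 + ∑ A ∈ s₁, Cf A)
    refine Filter.eventually_atTop.2 ⟨max N₀ (s₁.sup Nf), fun n hn => ?_⟩
    have hcnt0 : 1 + ∑ A ∈ s₁, Cf A ≤
        Stmt18Aux.cnt (B n) (fun x => m ≤ x ∧ ∀ A ∈ s₀, x ∉ A) :=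
      hN₀ n (le_trans (le_max_left _ _) hn)
    have hsum : ∑ A ∈ s₁, Stmt18Aux.cnt (B n) (· ∈ A) ≤ ∑ A ∈ s₁, Cf A := by
      apply Finset.sum_le_sum
      intro A hA
      refine hCf A hA n ?_
      have h1 : Nf A ≤ s₁.sup Nf := Finset.le_sup hA
      have h2 := le_max_right N₀ (s₁.sup Nf)
      omega
    have hlt : ∑ A ∈ s₁, Stmt18Aux.cnt (B n) (· ∈ A) <
        Stmt18Aux.cnt (B n) (fun x => m ≤ x ∧ ∀ A ∈ s₀, x ∉ A) := by omega
    obtain ⟨x, hxB, hxP, hxs₁⟩ := Stmt18Aux.exists_of_cnt_lt hlt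
    refine ⟨x, ⟨?_, ?_⟩, ?_⟩
    · apply hsubY
      refine ⟨hxP.1, fun A hA => ?_⟩
      by_cases hAG : A ∈ G
      · exact hxP.2 A (Finset.mem_filter.2 ⟨hA, hAG⟩)
      · exact hxs₁ A (Finset.mem_filter.2 ⟨hA, hAG⟩)
    · exact (hlowmem n x hxB).2
    · have := Finset.le_max' (B n) x hxB
      simp only [Set.mem_Iio]
      omega
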